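/- Let I be a finite type with a distinguished element e and an involution j ↦ j∨ on I fixing e. Let S be a symmetric I-by-I matrix over ℂ, set dim j := S e j, and assume dim j ≠ 0 for all j, dim e = 1, and dim (j∨) = dim j for all j. Suppose the fusion coefficients N : I → I → I → ℂ satisfy the Verlinde formula S i k * S j k = dim k * ∑_p N i j p * S p k for all i, j, k, and that N i j e = 1 if j = i∨ and N i j e = 0 otherwise. If d̂ : I → ℂ satisfies ∑_j d̂ j * S j i = (1 if i = e else 0) for all i, then dim j = d̂ j / d̂ e for every j ∈ I. -/
import Mathlib


open Matrix BigOperators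

/-- Equation (eq-d=d): `dim(j) = d̂(j)/d̂(e)` for every `j`. -/
theorem stmt_7 {I : Type*} [Fintype I] [DecidableEq I]
    (e : I) (v : I → I) (hv : Function.Involutive v) (hve : v e = e)
    (S : Matrix I I ℂ) (hS : S.IsSymm)
    (hdim : ∀ j, S e j ≠ 0) (hde : S e e = 1)
    (hdual : ∀ j, S e (v j) = S e j)
    (N : I → I → I → ℂ)
    (hVer : ∀ i j k, S i k * S j k = S e k * ∑ p, N i j p * S p k)
    (hNe : ∀ i j, N i j e = if j = v i then 1 else 0)
    (dhat : I → ℂ)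
    (hd : ∀ i, ∑ j, dhat j * S j i = if i = e then 1 else 0) :
    ∀ j, S e j = dhat j / dhat e := by
  have hsymm : ∀ i j, S i j = S j i := fun i j => (congrFun (congrFun hS j) i)
  -- Key relation: ∑ k, (dhat k / S e k) * S i k * S j k = δ_{j = v i}
  have hR : ∀ i j, (∑ k, dhat k / S e k * S i k * S j k) = if j = v i then 1 else 0 := by
    intro i j
    have step : ∀ k, dhat k / S e k * S i k * S j k
        = ∑ p, N i j p * (dhat k * S p k) := by
      intro k
      rw [mul_assoc, hVer i j k, ← mul_assoc, div_mul_cancel₀ _ (hdim k),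
        Finset.mul_sum Finset.univ (fun p => N i j p * S p k) (dhat k)]
      exact Finset.sum_congr rfl fun p _ => by ring
    calc (∑ k, dhat k / S e k * S i k * S j k)
        = ∑ k, ∑ p, N i j p * (dhat k * S p k) := Finset.sum_congr rfl fun k _ => step k
      _ = ∑ p, N i j p * ∑ k, dhat k * S p k := by
          rw [Finset.sum_comm]
          exact Finset.sum_congr rfl fun p _ => (Finset.mul_sum _ _ _).symm
      _ = ∑ p, N i j p * (if p = e then 1 else 0) := by
          refine Finset.sum_congr rfl fun p _ => ?_
          rw [show (∑ k, dhat k * S p k) = ∑ k, dhat k * S k p from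
            Finset.sum_congr rfl fun k _ => by rw [hsymm p k], hd p]
      _ = N i j e := by simp
      _ = if j = v i then 1 else 0 := hNe i j
  -- Contract with dhat: dhat (v i) = dhat e * S e i
  have h2 : ∀ i, dhat (v i) = dhat e * S e i := by
    intro i
    have lhs : (∑ j, (∑ k, dhat k / S e k * S i k * S j k) * dhat j) = dhat (v i) := by
      rw [Finset.sum_congr rfl fun j _ => by rw [hR i j]]
      simp
    have rhs : (∑ j, (∑ k, dhat k / S e k * S i k * S j k) * dhat j)
        = dhat e * S e i := by
      calc (∑ j, (∑ k, dhat k / S e k * S i k * S j k) * dhat j)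
          = ∑ j, ∑ k, dhat k / S e k * S i k * (dhat j * S j k) := by
            refine Finset.sum_congr rfl fun j _ => ?_
            rw [Finset.sum_mul]
            exact Finset.sum_congr rfl fun k _ => by ring
        _ = ∑ k, dhat k / S e k * S i k * ∑ j, dhat j * S j k := by
            rw [Finset.sum_comm]
            exact Finset.sum_congr rfl fun k _ => (Finset.mul_sum _ _ _).symm
        _ = ∑ k, dhat k / S e k * S i k * (if k = e then 1 else 0) := by
            exact Finset.sum_congr rfl fun k _ => by rw [hd k]
        _ = dhat e / S e e * S i e := by simp
        _ = dhat e * S e i := by rw [hde, hsymm i e]; ring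
    rw [← lhs, rhs]
  have h3 : ∀ j, dhat j = dhat e * S e j := by
    intro j
    have := h2 (v j)
    rwa [hv j, hdual j] at this
  have hne : dhat e ≠ 0 := by
    intro h0
    have := hd e
    simp only [if_pos rfl] at this
    rw [Finset.sum_congr rfl fun j _ => by rw [h3 j, h0, zero_mul, zero_mul]] at this
    simp at this
  intro j
  rw [h3 j, mul_div_assoc]
  field_simp
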